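/- Let A = B[z1, z2, t]/(z1 z2) where B is an integral k-algebra of finite type, with Gm-action z1 ↦ σ^a z1, z2 ↦ z2, t ↦ σ^b t for fixed integers a > 0 and b < 0. Let R = A^{⊕m}, let φ: R → M be a Gm-equivariant quotient A-module with M flat over k[t], let I = (z1, z2) ⊂ A, A_0 = A/(t), I_0 = (z1,z2) ⊂ A_0, M_0 = M ⊗_A A_0, and let M_I (resp. (M_0)_{I_0}) denote the submodule of elements annihilated by some power of I (resp. I_0). Then the natural homomorphism M_I ⊗_A A_0 → (M_0)_{I_0} is an isomorphism. -/

import Mathlib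

set_option maxHeartbeats 2000000
set_option synthInstance.maxHeartbeats 400000
set_option linter.unusedSectionVars false
set_option linter.dupNamespace false
set_option linter.unnecessarySimpa false


set_option linter.unusedSectionVars false
namespace LemmaAAux

lemma mem_span_singleton_smul_top {A M : Type*} [CommRing A] [AddCommGroup M] [Module A M]
    (c : A) (x : M) :
    x ∈ (Ideal.span {c} • (⊤ : Submodule A M)) ↔ ∃ y, x = c • y := by
  constructor
  · intro hx
    refine Submodule.smul_induction_on hx ?_ ?_
    · rintro r hr n -
      obtain ⟨d, rfl⟩ := Ideal.mem_span_singleton.mp hr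
      exact ⟨d • n, by rw [mul_smul]⟩
    · rintro y z ⟨u, rfl⟩ ⟨v, rfl⟩
      exact ⟨u + v, (smul_add _ _ _).symm⟩
  · rintro ⟨y, rfl⟩
    exact Submodule.smul_mem_smul (Ideal.mem_span_singleton_self c) trivial

section Graded

variable {B M : Type*} [CommRing B] [AddCommGroup M] [Module B M]
variable (Mgr : ℤ → Submodule B M) [DirectSum.Decomposition Mgr]
variable {A : Type*} [CommRing A] [Module A M]

lemma shift_smul_pow (c : A) (d : ℤ)
    (hc : ∀ s, ∀ x ∈ Mgr s, c • x ∈ Mgr (s + d)) :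
    ∀ (N : ℕ) (s : ℤ), ∀ x ∈ Mgr s, (c ^ N) • x ∈ Mgr (s + N * d) := by
  intro N
  induction N with
  | zero => intro s x hx; simpa using hx
  | succ n ih =>
    intro s x hx
    have h1 := hc _ _ (ih s x hx)
    have e : (c ^ (n + 1)) • x = c • ((c ^ n) • x) := by
      rw [pow_succ, mul_comm, mul_smul]
    have e2 : (s + (n : ℤ) * d) + d = s + ((n + 1 : ℕ) : ℤ) * d := by push_cast; ring
    rw [e, ← e2]
    exact h1

lemma decompose_shift (c : A) (d : ℤ)
    (hc : ∀ s, ∀ x ∈ Mgr s, c • x ∈ Mgr (s + d)) (x : M) (ℓ : ℤ) :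
    (DirectSum.decompose Mgr (c • x) (ℓ + d) : M) = c • (DirectSum.decompose Mgr x ℓ : M) := by
  refine DirectSum.Decomposition.inductionOn Mgr
    (motive := fun y => (DirectSum.decompose Mgr (c • y) (ℓ + d) : M)
      = c • (DirectSum.decompose Mgr y ℓ : M)) ?_ ?_ ?_ x
  · simp
  · intro i mm
    by_cases h : i = ℓ
    · subst h
      rw [DirectSum.decompose_of_mem_same Mgr (hc i mm mm.2),
        DirectSum.decompose_of_mem_same Mgr mm.2]
    · rw [DirectSum.decompose_of_mem_ne Mgr (hc i mm mm.2) (by omega),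
        DirectSum.decompose_of_mem_ne Mgr mm.2 h, smul_zero]
  · intro y z hy hz
    rw [smul_add, DirectSum.decompose_add, DirectSum.add_apply, Submodule.coe_add, hy, hz,
      DirectSum.decompose_add, DirectSum.add_apply, Submodule.coe_add, smul_add]

lemma decompose_bsmul (cB : B) (x : M) (ℓ : ℤ) :
    (DirectSum.decompose Mgr (cB • x) ℓ : M) = cB • (DirectSum.decompose Mgr x ℓ : M) := by
  refine DirectSum.Decomposition.inductionOn Mgr
    (motive := fun y => (DirectSum.decompose Mgr (cB • y) ℓ : M)
      = cB • (DirectSum.decompose Mgr y ℓ : M)) ?_ ?_ ?_ x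
  · simp
  · intro i mm
    by_cases h : i = ℓ
    · subst h
      rw [DirectSum.decompose_of_mem_same Mgr (Submodule.smul_mem _ cB mm.2),
        DirectSum.decompose_of_mem_same Mgr mm.2]
    · rw [DirectSum.decompose_of_mem_ne Mgr (Submodule.smul_mem _ cB mm.2) h,
        DirectSum.decompose_of_mem_ne Mgr mm.2 h, smul_zero]
  · intro y z hy hz
    rw [smul_add, DirectSum.decompose_add, DirectSum.add_apply, Submodule.coe_add, hy, hz,
      DirectSum.decompose_add, DirectSum.add_apply, Submodule.coe_add, smul_add]

end Graded
set_option linter.unusedSectionVars false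


section KeyDiv

variable {B M : Type*} [CommRing B] [AddCommGroup M] [Module B M]
variable {A : Type*} [CommRing A] [Algebra B A] [Module A M] [IsScalarTower B A M]
variable (Mgr : ℤ → Submodule B M) [DirectSum.Decomposition Mgr]
variable (a bb : ℤ) (z1 z2 t : A)

/-- every element of the monoid generated by `z1, z2, t` is a monomial -/
lemma monoid_monomial : ∀ r ∈ Submonoid.closure ({z1, z2, t} : Set A),
    ∃ i j kk : ℕ, r = z1 ^ i * z2 ^ j * t ^ kk := by
  intro r hr
  induction hr using Submonoid.closure_induction with
  | mem x hx =>
    simp only [Set.mem_insert_iff, Set.mem_singleton_iff] at hx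
    rcases hx with rfl | rfl | rfl
    · exact ⟨1, 0, 0, by simp⟩
    · exact ⟨0, 1, 0, by simp⟩
    · exact ⟨0, 0, 1, by simp⟩
  | one => exact ⟨0, 0, 0, by simp⟩
  | mul x y hx hy ihx ihy =>
    obtain ⟨i, j, kk, rfl⟩ := ihx
    obtain ⟨i', j', kk', rfl⟩ := ihy
    exact ⟨i + i', j + j', kk + kk', by rw [pow_add, pow_add, pow_add]; ring⟩

lemma key_div
    (hgen : ∀ r : A, r ∈ Algebra.adjoin B ({z1, z2, t} : Set A))
    (h1 : ∀ l, ∀ x ∈ Mgr l, z1 • x ∈ Mgr (l + a))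
    (h2 : ∀ l, ∀ x ∈ Mgr l, z2 • x ∈ Mgr l)
    (h3 : ∀ l, ∀ x ∈ Mgr l, t • x ∈ Mgr (l + bb))
    {m : ℕ} (φ : (Fin m → A) →ₗ[A] M) (hφ : Function.Surjective φ)
    (hφ0 : ∀ i, φ (Pi.single i 1) ∈ Mgr 0)
    (s : ℤ) (N : Submodule A M)
    (hmono : ∀ i j kk : ℕ, (a * i + bb * kk : ℤ) = s →
      ∀ g ∈ Mgr 0, ((z1 ^ i * z2 ^ j * t ^ kk) • g) ∈ N) :
    ∀ x ∈ Mgr s, x ∈ N := by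
  classical
  have hz1p := shift_smul_pow Mgr z1 a h1
  have hz2p : ∀ (n : ℕ) (l : ℤ), ∀ x ∈ Mgr l, (z2 ^ n) • x ∈ Mgr l := by
    intro n l x hx
    simpa using shift_smul_pow Mgr z2 0 (by simpa using h2) n l x hx
  have htp := shift_smul_pow Mgr t bb h3
  -- weight of a monomial action
  have hwt : ∀ (i j kk : ℕ) (g : M), g ∈ Mgr 0 →
      ((z1 ^ i * z2 ^ j * t ^ kk) • g) ∈ Mgr (a * i + bb * kk) := by
    intro i j kk g hg
    have e : (z1 ^ i * z2 ^ j * t ^ kk) • g = (z1 ^ i) • ((z2 ^ j) • ((t ^ kk) • g)) := by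
      rw [smul_smul, smul_smul, mul_assoc]
    have s1 := htp kk 0 g hg
    have s2 := hz2p j _ _ s1
    have s3 := hz1p i _ _ s2
    have e3 : (0 + (kk : ℤ) * bb) + (i : ℤ) * a = a * i + bb * kk := by ring
    rw [e3] at s3
    rw [e]; exact s3
  -- the projection onto weight s, as an additive hom
  let π : M →+ M :=
    { toFun := fun y => (DirectSum.decompose Mgr y s : M)
      map_zero' := by simp
      map_add' := fun y z => by
        show (DirectSum.decompose Mgr (y + z) s : M)
          = (DirectSum.decompose Mgr y s : M) + (DirectSum.decompose Mgr z s : M)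
        rw [DirectSum.decompose_add, DirectSum.add_apply, Submodule.coe_add] }
  have hπ : ∀ (r : A) (g : M), g ∈ Mgr 0 → π (r • g) ∈ N := by
    intro r g hg
    have hr : r ∈ Submodule.span B ((Submonoid.closure ({z1, z2, t} : Set A) : Set A)) := by
      have := hgen r
      rwa [← Subalgebra.mem_toSubmodule, Algebra.adjoin_eq_span] at this
    induction hr using Submodule.span_induction with
    | mem rr hrr =>
      obtain ⟨i, j, kk, rfl⟩ := monoid_monomial z1 z2 t rr hrr
      have hmem := hwt i j kk g hg
      by_cases hs : (a * i + bb * kk : ℤ) = s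
      · have : π ((z1 ^ i * z2 ^ j * t ^ kk) • g) = (z1 ^ i * z2 ^ j * t ^ kk) • g := by
          show (DirectSum.decompose Mgr _ s : M) = _
          rw [← hs]
          exact DirectSum.decompose_of_mem_same Mgr hmem
        rw [this]
        exact hmono i j kk hs g hg
      · have : π ((z1 ^ i * z2 ^ j * t ^ kk) • g) = 0 := by
          show (DirectSum.decompose Mgr _ s : M) = 0
          exact DirectSum.decompose_of_mem_ne Mgr hmem hs
        rw [this]; exact N.zero_mem
    | zero => simpa using N.zero_mem
    | add rr1 rr2 _ _ ih1 ih2 =>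
      have : (rr1 + rr2) • g = rr1 • g + rr2 • g := add_smul _ _ _
      rw [this, map_add]
      exact N.add_mem ih1 ih2
    | smul cB rr _ ih =>
      have e1 : (cB • rr) • g = cB • (rr • g) := smul_assoc cB rr g
      have e2 : π (cB • (rr • g)) = cB • π (rr • g) := decompose_bsmul Mgr cB (rr • g) s
      rw [e1, e2, ← algebraMap_smul A cB (π (rr • g))]
      exact N.smul_mem _ ih
  -- now decompose an arbitrary x ∈ Mgr s
  intro x hxs
  obtain ⟨r, rfl⟩ := hφ x
  have hr : r = ∑ i : Fin m, (r i) • (Pi.single i 1 : Fin m → A) := by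
    funext j
    rw [Finset.sum_apply]
    simp [Pi.single_apply]
  have hx : φ r = ∑ i : Fin m, (r i) • φ (Pi.single i 1) := by
    conv_lhs => rw [hr]
    rw [map_sum]
    simp only [map_smul]
  have h5 : φ r = π (φ r) := (DirectSum.decompose_of_mem_same Mgr hxs).symm
  rw [h5, hx, map_sum]
  exact Submodule.sum_mem N (fun i _ => hπ (r i) _ (hφ0 i))

end KeyDiv

section Main

variable {B M : Type*} [CommRing B] [AddCommGroup M] [Module B M]
variable {A : Type*} [CommRing A] [Algebra B A] [Module A M] [IsScalarTower B A M]

theorem main (a bb : ℤ) (ha : 0 < a) (hb : bb < 0)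
    (z1 z2 t : A) (hz12 : z1 * z2 = 0)
    (hgen : ∀ r : A, r ∈ Algebra.adjoin B ({z1, z2, t} : Set A))
    (Mgr : ℤ → Submodule B M)
    (hint : DirectSum.IsInternal Mgr)
    (h1 : ∀ l, ∀ x ∈ Mgr l, z1 • x ∈ Mgr (l + a))
    (h2 : ∀ l, ∀ x ∈ Mgr l, z2 • x ∈ Mgr l)
    (h3 : ∀ l, ∀ x ∈ Mgr l, t • x ∈ Mgr (l + bb))
    {m : ℕ} (φ : (Fin m → A) →ₗ[A] M) (hφ : Function.Surjective φ)
    (hφ0 : ∀ i, φ (Pi.single i 1) ∈ Mgr 0)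
    (hreg : ∀ v : M, t • v = 0 → v = 0) :
    LinearMap.ker ((Submodule.mkQ (Ideal.span {t} • (⊤ : Submodule A M))).comp
      (⨆ n : ℕ, Submodule.torsionBySet A M
        ((Ideal.span {z1, z2} ^ n : Ideal A) : Set A)).subtype)
      = Ideal.span {t} • (⊤ : Submodule A ↥(⨆ n : ℕ, Submodule.torsionBySet A M
        ((Ideal.span {z1, z2} ^ n : Ideal A) : Set A))) ∧
    LinearMap.range ((Submodule.mkQ (Ideal.span {t} • (⊤ : Submodule A M))).comp
      (⨆ n : ℕ, Submodule.torsionBySet A M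
        ((Ideal.span {z1, z2} ^ n : Ideal A) : Set A)).subtype)
      = ⨆ n : ℕ, Submodule.torsionBySet A (M ⧸ Ideal.span {t} • (⊤ : Submodule A M))
        ((Ideal.span {z1, z2} ^ n : Ideal A) : Set A) := by
  classical
  letI : DirectSum.Decomposition Mgr := hint.chooseDecomposition
  set I : Ideal A := Ideal.span {z1, z2} with hI
  set T : Submodule A M := Ideal.span {t} • (⊤ : Submodule A M) with hT
  set MI : Submodule A M :=
    ⨆ n : ℕ, Submodule.torsionBySet A M ((I ^ n : Ideal A) : Set A) with hMI
  -- basic facts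
  have hz2z1 : z2 * z1 = 0 := by rw [mul_comm]; exact hz12
  have hz1p := shift_smul_pow Mgr z1 a h1
  have hz2p : ∀ (n : ℕ) (l : ℤ), ∀ x ∈ Mgr l, (z2 ^ n) • x ∈ Mgr l := by
    intro n l x hx
    simpa using shift_smul_pow Mgr z2 0 (by simpa using h2) n l x hx
  have hmemT : ∀ x : M, x ∈ T ↔ ∃ y, x = t • y := fun x =>
    mem_span_singleton_smul_top t x
  have hTgr : ∀ x ∈ T, ∀ ℓ : ℤ, (DirectSum.decompose Mgr x ℓ : M) ∈ T := by
    intro x hx ℓ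
    obtain ⟨y, rfl⟩ := (hmemT x).1 hx
    have hd := decompose_shift Mgr t bb h3 y (ℓ - bb)
    rw [sub_add_cancel] at hd
    rw [hd]
    exact (hmemT _).2 ⟨_, rfl⟩
  -- membership in MI
  have hdirM : Monotone (fun n : ℕ =>
      Submodule.torsionBySet A M ((I ^ n : Ideal A) : Set A)) := by
    intro n n' hnn
    exact Submodule.torsionBySet_le_torsionBySet_of_subset
      (Ideal.pow_le_pow_right hnn)
  have hmemMI : ∀ y : M, y ∈ MI ↔ ∃ n : ℕ, ∀ r ∈ (I ^ n : Ideal A), r • y = 0 := by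
    intro y
    rw [hMI, Submodule.mem_iSup_of_directed _ hdirM.directed_le]
    constructor
    · rintro ⟨n, hn⟩
      exact ⟨n, fun r hr => (Submodule.mem_torsionBySet_iff _ _).1 hn ⟨r, hr⟩⟩
    · rintro ⟨n, hn⟩
      exact ⟨n, (Submodule.mem_torsionBySet_iff _ _).2 (fun r => hn r r.2)⟩
  have hMI_of : ∀ (c : ℕ) (y : M), (z1 ^ c) • y = 0 → (z2 ^ c) • y = 0 → y ∈ MI := by
    intro c y hy1 hy2
    refine (hmemMI y).2 ⟨c + c, ?_⟩
    intro r hr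
    have h4 : r ∈ Ideal.span {z1} ^ c ⊔ Ideal.span {z2} ^ c := by
      apply Ideal.sup_pow_add_le_pow_sup_pow
      rw [hI, Ideal.span_insert] at hr
      exact hr
    rw [Ideal.span_singleton_pow, Ideal.span_singleton_pow] at h4
    obtain ⟨r1, hr1, r2, hr2, rfl⟩ := Submodule.mem_sup.mp h4
    obtain ⟨d1, rfl⟩ := Ideal.mem_span_singleton.mp hr1
    obtain ⟨d2, rfl⟩ := Ideal.mem_span_singleton.mp hr2
    have e1 : (z1 ^ c * d1) • y = d1 • ((z1 ^ c) • y) := by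
      rw [smul_smul, mul_comm]
    have e2 : (z2 ^ c * d2) • y = d2 • ((z2 ^ c) • y) := by
      rw [smul_smul, mul_comm]
    rw [add_smul, e1, e2, hy1, hy2, smul_zero, smul_zero, add_zero]
  -- divisibility lemmas
  have hdiv1 : ∀ (n : ℕ) (s : ℤ), (n : ℤ) * a + 1 ≤ s →
      ∀ x ∈ Mgr s, ∃ w : M, x = (z1 ^ (n + 1)) • w := by
    intro n s hs x hx
    have hx' : x ∈ Ideal.span {z1 ^ (n + 1)} • (⊤ : Submodule A M) := by
      refine key_div Mgr a bb z1 z2 t hgen h1 h2 h3 φ hφ hφ0 s _ ?_ x hx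
      intro i j kk hw g hg
      have hbk : (bb : ℤ) * kk ≤ 0 :=
        mul_nonpos_of_nonpos_of_nonneg hb.le (Int.natCast_nonneg kk)
      have hi : n + 1 ≤ i := by
        have hipos : (n : ℤ) + 1 ≤ (i : ℤ) := by nlinarith [Int.natCast_nonneg i]
        exact_mod_cast hipos
      obtain ⟨e, he⟩ := Nat.exists_eq_add_of_le hi
      have efac : z1 ^ i * z2 ^ j * t ^ kk = z1 ^ (n + 1) * (z1 ^ e * z2 ^ j * t ^ kk) := by
        rw [he, pow_add]; ring
      rw [efac, mul_smul]
      exact (mem_span_singleton_smul_top _ _).2 ⟨_, rfl⟩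
    obtain ⟨w, hw⟩ := (mem_span_singleton_smul_top _ _).1 hx'
    exact ⟨w, hw⟩
  have hdiv2 : ∀ s : ℤ, s < 0 → ∀ x ∈ Mgr s, x ∈ T := by
    intro s hs x hx
    refine key_div Mgr a bb z1 z2 t hgen h1 h2 h3 φ hφ hφ0 s T ?_ x hx
    intro i j kk hw g hg
    have hai : 0 ≤ (a : ℤ) * i := mul_nonneg ha.le (Int.natCast_nonneg i)
    have hkk : 1 ≤ kk := by
      by_contra hc
      push_neg at hc
      interval_cases kk
      · simp only [Nat.cast_zero, mul_zero, add_zero] at hw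
        omega
    obtain ⟨e, he⟩ := Nat.exists_eq_add_of_le hkk
    have efac : z1 ^ i * z2 ^ j * t ^ kk = t * (z1 ^ i * z2 ^ j * t ^ e) := by
      rw [he, pow_add]; ring
    rw [efac, mul_smul]
    exact (hmemT _).2 ⟨_, rfl⟩
  -- the core correction lemma
  have core : ∀ (n : ℕ) (ℓ : ℤ) (x : M), x ∈ Mgr ℓ →
      (z1 ^ (n + 1)) • x ∈ T → (z2 ^ (n + 1)) • x ∈ T →
      ∃ y ∈ MI, x - y ∈ T := by
    intro n ℓ x hx hx1 hx2
    rcases lt_or_ge ℓ 0 with hneg | hpos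
    · exact ⟨0, MI.zero_mem, by simpa using hdiv2 ℓ hneg x hx⟩
    obtain ⟨u₀, hu₀⟩ := (hmemT _).1 hx1
    have hu : t • (DirectSum.decompose Mgr u₀ (ℓ + (n + 1 : ℕ) * a - bb) : M)
        = (z1 ^ (n + 1)) • x := by
      have hd := decompose_shift Mgr t bb h3 u₀ (ℓ + (n + 1 : ℕ) * a - bb)
      rw [sub_add_cancel] at hd
      rw [← hd, ← hu₀, DirectSum.decompose_of_mem_same Mgr (hz1p (n + 1) ℓ x hx)]
    obtain ⟨w, hw⟩ := hdiv1 (n + 1) (ℓ + (n + 1 : ℕ) * a - bb)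
      (by push_cast; linarith) _ (SetLike.coe_mem _)
    rw [hw] at hu
    -- hu : t • (z1 ^ (n+2)) • w = z1^(n+1) • x
    refine ⟨x - t • (z1 • w), ?_, ?_⟩
    · apply hMI_of ((n + 1) + (n + 1))
      · -- z1 part
        have h0 : (z1 ^ (n + 1)) • (x - t • (z1 • w)) = 0 := by
          rw [smul_sub]
          have e1 : (z1 ^ (n + 1)) • (t • (z1 • w)) = t • ((z1 ^ (n + 1 + 1)) • w) := by
            rw [smul_smul, smul_smul, smul_smul]
            congr 1
            ring
          rw [e1, ← hu, sub_self]
        rw [pow_add, mul_smul, h0, smul_zero]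
      · -- z2 part
        have hz2y : (z2 ^ (n + 1)) • (x - t • (z1 • w)) = (z2 ^ (n + 1)) • x := by
          rw [smul_sub]
          have e0 : (z2 ^ (n + 1)) • (t • (z1 • w)) = 0 := by
            have ez : z2 ^ (n + 1) * (t * z1) = 0 := by
              have h7 : z2 ^ (n + 1) * z1 = 0 := by
                rw [pow_succ, mul_assoc, hz2z1, mul_zero]
              calc z2 ^ (n + 1) * (t * z1) = (z2 ^ (n + 1) * z1) * t := by ring
                _ = 0 := by rw [h7, zero_mul]
            rw [smul_smul, smul_smul, mul_assoc, ez, zero_smul]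
          rw [e0, sub_zero]
        obtain ⟨v₀, hv₀⟩ := (hmemT _).1 hx2
        have hv : t • (DirectSum.decompose Mgr v₀ (ℓ - bb) : M) = (z2 ^ (n + 1)) • x := by
          have hd := decompose_shift Mgr t bb h3 v₀ (ℓ - bb)
          rw [sub_add_cancel] at hd
          rw [← hd, ← hv₀, DirectSum.decompose_of_mem_same Mgr (hz2p (n + 1) ℓ x hx)]
        obtain ⟨w₂, hw₂⟩ := hdiv1 0 (ℓ - bb) (by push_cast; linarith) _ (SetLike.coe_mem _)
        rw [hw₂] at hv
        have ez : z2 ^ (n + 1) * (t * z1 ^ (0 + 1)) = 0 := by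
          have h6 : z2 ^ (n + 1) * z1 = 0 := by
            rw [pow_succ, mul_assoc, hz2z1, mul_zero]
          calc z2 ^ (n + 1) * (t * z1 ^ (0 + 1)) = (z2 ^ (n + 1) * z1) * t := by ring
            _ = 0 := by rw [h6, zero_mul]
        rw [pow_add, mul_smul, hz2y, ← hv]
        rw [smul_smul, smul_smul, mul_assoc, ez, zero_smul]
    · rw [sub_sub_cancel]
      exact (hmemT _).2 ⟨_, rfl⟩
  constructor
  · -- kernel
    ext x
    simp only [LinearMap.mem_ker, LinearMap.comp_apply, Submodule.subtype_apply,
      Submodule.mkQ_apply, Submodule.Quotient.mk_eq_zero]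
    rw [mem_span_singleton_smul_top (A := A) (M := MI) t x]
    constructor
    · intro hxT
      obtain ⟨y, hy⟩ := (hmemT _).1 hxT
      obtain ⟨n, hn⟩ := (hmemMI _).1 x.2
      have hyMI : y ∈ MI := by
        refine (hmemMI y).2 ⟨n, fun r hr => hreg _ ?_⟩
        have : t • (r • y) = r • ((x : M)) := by
          rw [hy, smul_smul, smul_smul, mul_comm]
        rw [this, hn r hr]
      refine ⟨⟨y, hyMI⟩, ?_⟩
      exact Subtype.ext hy
    · rintro ⟨y, rfl⟩
      exact (hmemT _).2 ⟨(y : M), rfl⟩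
  · -- range
    ext q
    simp only [LinearMap.mem_range, LinearMap.comp_apply, Submodule.subtype_apply,
      Submodule.mkQ_apply]
    constructor
    · rintro ⟨⟨x, hxMI⟩, rfl⟩
      obtain ⟨n, hn⟩ := (hmemMI x).1 hxMI
      refine le_iSup (fun n : ℕ => Submodule.torsionBySet A (M ⧸ T)
        ((I ^ n : Ideal A) : Set A)) n ?_
      rw [Submodule.mem_torsionBySet_iff]
      rintro ⟨r, hr⟩
      show r • Submodule.Quotient.mk x = 0
      rw [← Submodule.Quotient.mk_smul, hn r hr, Submodule.Quotient.mk_zero]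
    · intro hq
      have hdirQ : Monotone (fun n : ℕ =>
          Submodule.torsionBySet A (M ⧸ T) ((I ^ n : Ideal A) : Set A)) := by
        intro n n' hnn
        exact Submodule.torsionBySet_le_torsionBySet_of_subset
          (Ideal.pow_le_pow_right hnn)
      obtain ⟨n, hn⟩ := (Submodule.mem_iSup_of_directed _ hdirQ.directed_le).mp hq
      obtain ⟨x₀, rfl⟩ := Submodule.Quotient.mk_surjective T q
      rw [Submodule.mem_torsionBySet_iff] at hn
      have hz1I : z1 ^ (n + 1) ∈ (I ^ n : Ideal A) := by
        apply Ideal.pow_le_pow_right (Nat.le_succ n)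
        exact Ideal.pow_mem_pow (Ideal.subset_span (Set.mem_insert _ _)) (n + 1)
      have hz2I : z2 ^ (n + 1) ∈ (I ^ n : Ideal A) := by
        apply Ideal.pow_le_pow_right (Nat.le_succ n)
        refine Ideal.pow_mem_pow (Ideal.subset_span ?_) (n + 1)
        exact Set.mem_insert_of_mem _ rfl
      have hq1 : (z1 ^ (n + 1)) • x₀ ∈ T := by
        rw [← Submodule.Quotient.mk_eq_zero, Submodule.Quotient.mk_smul]
        exact hn ⟨z1 ^ (n + 1), hz1I⟩
      have hq2 : (z2 ^ (n + 1)) • x₀ ∈ T := by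
        rw [← Submodule.Quotient.mk_eq_zero, Submodule.Quotient.mk_smul]
        exact hn ⟨z2 ^ (n + 1), hz2I⟩
      have hcomp : ∀ ℓ : ℤ, ∃ y ∈ MI, (DirectSum.decompose Mgr x₀ ℓ : M) - y ∈ T := by
        intro ℓ
        refine core n ℓ _ (SetLike.coe_mem _) ?_ ?_
        · have hd := decompose_shift Mgr (z1 ^ (n + 1)) (((n + 1 : ℕ) : ℤ) * a)
            (hz1p (n + 1)) x₀ ℓ
          rw [← hd]
          exact hTgr _ hq1 _
        · have hd := decompose_shift Mgr (z2 ^ (n + 1)) 0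
            (fun s x hx => by simpa using hz2p (n + 1) s x hx) x₀ ℓ
          rw [add_zero] at hd
          rw [← hd]
          exact hTgr _ hq2 _
      choose y hyMI hyT using hcomp
      set S := (DirectSum.decompose Mgr x₀).support with hS
      refine ⟨⟨∑ ℓ ∈ S, y ℓ, Submodule.sum_mem MI (fun ℓ _ => hyMI ℓ)⟩, ?_⟩
      have hsub : x₀ - ∑ ℓ ∈ S, y ℓ ∈ T := by
        have hx₀ : x₀ = ∑ ℓ ∈ S, (DirectSum.decompose Mgr x₀ ℓ : M) :=
          (DirectSum.sum_support_decompose Mgr x₀).symm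
        have : x₀ - ∑ ℓ ∈ S, y ℓ
            = ∑ ℓ ∈ S, ((DirectSum.decompose Mgr x₀ ℓ : M) - y ℓ) := by
          rw [Finset.sum_sub_distrib, ← hx₀]
        rw [this]
        exact Submodule.sum_mem T (fun ℓ _ => hyT ℓ)
      show Submodule.Quotient.mk (∑ ℓ ∈ S, y ℓ) = Submodule.Quotient.mk x₀
      rw [Submodule.Quotient.eq]
      have hneg := T.neg_mem hsub
      rwa [neg_sub] at hneg

end Main

end LemmaAAux

namespace LemmaAAuxB

lemma reg_of_flat {k A M : Type*} [Field k] [CommRing A] [Algebra k A]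
    [AddCommGroup M] [Module A M] (t : A)
    (hflat : letI : Module (Polynomial k) M :=
        Module.compHom M (Polynomial.aeval t : Polynomial k →ₐ[k] A).toRingHom
      Module.Flat (Polynomial k) M) :
    ∀ v : M, t • v = 0 → v = 0 := by
  letI : Module (Polynomial k) M :=
    Module.compHom M (Polynomial.aeval t : Polynomial k →ₐ[k] A).toRingHom
  have hf : Module.Flat (Polynomial k) M := hflat
  have hX : IsSMulRegular (Polynomial k) (Polynomial.X : Polynomial k) := by
    intro p q h
    simp only [smul_eq_mul] at h
    exact mul_left_cancel₀ Polynomial.X_ne_zero h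
  have h2 : IsSMulRegular M (Polynomial.X : Polynomial k) :=
    (hX.rTensor M).of_injective
      ((TensorProduct.lid (Polynomial k) M).symm.toLinearMap)
      ((TensorProduct.lid (Polynomial k) M).symm.injective)
  intro v hv
  have hXv : (Polynomial.X : Polynomial k) • v = 0 := by
    show (Polynomial.aeval t (Polynomial.X : Polynomial k) : A) • v = 0
    rw [Polynomial.aeval_X]
    exact hv
  refine h2 ?_
  show (Polynomial.X : Polynomial k) • v = (Polynomial.X : Polynomial k) • (0 : M)
  rw [hXv, smul_zero]

end LemmaAAuxB



/-- (Lemma A of the paper.)  Let `A = B[z₁, z₂, t]/(z₁z₂)`, `B` an integral `k`-algebra of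
finite type, with the `G_m`-action `z₁ ↦ σ^a z₁`, `z₂ ↦ z₂`, `t ↦ σ^b t`, `a > 0 > b`
(encoded as a `ℤ`-grading `Mgr` of the module by `B`-submodules).  Let `φ : A^m → M` be a
`G_m`-equivariant quotient (the standard generators have weight `0`) with `M` flat over
`k[t]`, let `I = (z₁, z₂)`, `A₀ = A/(t)`, `M₀ = M ⊗_A A₀`, and let `M_I` (resp.
`(M₀)_{I₀}`) denote the submodule of elements annihilated by a power of `I` (resp. `I₀`).
Then the natural homomorphism `M_I ⊗_A A₀ → (M₀)_{I₀}` is an isomorphism; formalized: the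
map `g : M_I → M/(t·M)` has kernel `t·M_I` and image exactly the `I`-power-torsion of
`M/(t·M)`. -/
theorem torsion_commutes_with_central_fiber
    (k : Type) [Field k] [IsAlgClosed k] [CharZero k]
    (B : Type) [CommRing B] [IsDomain B] [Algebra k B] [Algebra.FiniteType k B]
    (a b : ℤ) (ha : 0 < a) (hb : b < 0)
    (m : ℕ)
    (M : Type) [AddCommGroup M]
    [Module (MvPolynomial (Fin 3) B ⧸
        Ideal.span {(MvPolynomial.X 0 : MvPolynomial (Fin 3) B) * MvPolynomial.X 1}) M]
    [Module B M]
    [IsScalarTower B (MvPolynomial (Fin 3) B ⧸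
        Ideal.span {(MvPolynomial.X 0 : MvPolynomial (Fin 3) B) * MvPolynomial.X 1}) M]
    (Mgr : ℤ → Submodule B M) :
    letI A := MvPolynomial (Fin 3) B ⧸
        Ideal.span {(MvPolynomial.X 0 : MvPolynomial (Fin 3) B) * MvPolynomial.X 1}
    letI z₁ : A := Ideal.Quotient.mk _ (MvPolynomial.X 0)
    letI z₂ : A := Ideal.Quotient.mk _ (MvPolynomial.X 1)
    letI t : A := Ideal.Quotient.mk _ (MvPolynomial.X 2)
    letI I : Ideal A := Ideal.span {z₁, z₂}
    -- `M = ⊕ M_[ℓ]` is the weight decomposition of the `G_m`-action: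
    DirectSum.IsInternal Mgr →
    (∀ l, ∀ x ∈ Mgr l, z₁ • x ∈ Mgr (l + a)) →
    (∀ l, ∀ x ∈ Mgr l, z₂ • x ∈ Mgr l) →
    (∀ l, ∀ x ∈ Mgr l, t • x ∈ Mgr (l + b)) →
    -- `φ : R = A^m → M` is a `G_m`-equivariant quotient:
    ∀ φ : (Fin m → A) →ₗ[A] M, Function.Surjective φ →
    (∀ i, φ (Pi.single i 1) ∈ Mgr 0) →
    -- `M` is flat over `k[t]`:
    (letI : Module (Polynomial k) M :=
        Module.compHom M (Polynomial.aeval t : Polynomial k →ₐ[k] A).toRingHom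
     Module.Flat (Polynomial k) M) →
    -- conclusion: `M_I ⊗_A A₀ ≅ (M₀)_{I₀}` via the natural map
    letI MI : Submodule A M := ⨆ n : ℕ, Submodule.torsionBySet A M ((I ^ n : Ideal A) : Set A)
    letI g := (Submodule.mkQ (Ideal.span {t} • (⊤ : Submodule A M))).comp MI.subtype
    LinearMap.ker g = Ideal.span {t} • (⊤ : Submodule A MI) ∧
      LinearMap.range g =
        ⨆ n : ℕ, Submodule.torsionBySet A (M ⧸ Ideal.span {t} • (⊤ : Submodule A M))
          ((I ^ n : Ideal A) : Set A) := by
  intro hint h1 h2 h3 φ hφ hφ0 hflat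
  have hz12 : (Ideal.Quotient.mk
        (Ideal.span {(MvPolynomial.X 0 : MvPolynomial (Fin 3) B) * MvPolynomial.X 1})
        (MvPolynomial.X 0)) *
      (Ideal.Quotient.mk
        (Ideal.span {(MvPolynomial.X 0 : MvPolynomial (Fin 3) B) * MvPolynomial.X 1})
        (MvPolynomial.X 1)) = 0 := by
    rw [← map_mul, Ideal.Quotient.eq_zero_iff_mem]
    exact Ideal.subset_span rfl
  have hgen : ∀ r : MvPolynomial (Fin 3) B ⧸
      Ideal.span {(MvPolynomial.X 0 : MvPolynomial (Fin 3) B) * MvPolynomial.X 1},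
      r ∈ Algebra.adjoin B ({Ideal.Quotient.mk
        (Ideal.span {(MvPolynomial.X 0 : MvPolynomial (Fin 3) B) * MvPolynomial.X 1})
        (MvPolynomial.X 0),
        Ideal.Quotient.mk
        (Ideal.span {(MvPolynomial.X 0 : MvPolynomial (Fin 3) B) * MvPolynomial.X 1})
        (MvPolynomial.X 1),
        Ideal.Quotient.mk
        (Ideal.span {(MvPolynomial.X 0 : MvPolynomial (Fin 3) B) * MvPolynomial.X 1})
        (MvPolynomial.X 2)} : Set _) := by
    intro r
    obtain ⟨p, rfl⟩ := Ideal.Quotient.mk_surjective r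
    have hp : p ∈ Algebra.adjoin B
        (Set.range (MvPolynomial.X : Fin 3 → MvPolynomial (Fin 3) B)) := by
      rw [MvPolynomial.adjoin_range_X]; trivial
    induction hp using Algebra.adjoin_induction with
    | mem q hq =>
      obtain ⟨i, rfl⟩ := hq
      fin_cases i
      · exact Algebra.subset_adjoin (Set.mem_insert _ _)
      · exact Algebra.subset_adjoin (Set.mem_insert_of_mem _ (Set.mem_insert _ _))
      · exact Algebra.subset_adjoin (Set.mem_insert_of_mem _ (Set.mem_insert_of_mem _ rfl))
    | algebraMap c =>
      rw [Ideal.Quotient.mk_algebraMap]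
      exact Subalgebra.algebraMap_mem _ c
    | add p q hpm hqm ihp ihq =>
      rw [map_add]; exact Subalgebra.add_mem _ ihp ihq
    | mul p q hpm hqm ihp ihq =>
      rw [map_mul]; exact Subalgebra.mul_mem _ ihp ihq
  have hreg := LemmaAAuxB.reg_of_flat (k := k)
    (Ideal.Quotient.mk
      (Ideal.span {(MvPolynomial.X 0 : MvPolynomial (Fin 3) B) * MvPolynomial.X 1})
      (MvPolynomial.X 2)) hflat
  exact LemmaAAux.main a b ha hb _ _ _ hz12 hgen Mgr hint h1 h2 h3 φ hφ hφ0 hreg
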